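/- arXiv:1412.8764 — 3 statements merged into one kernel-verified Lean document; each statement's English description precedes it below -/
import Mathlib

section
/- Let C : ℝ → ℝ be any function and let γ₀ > 0. Then there exist sequences (β_j)_{j≥1} and (u_j)_{j≥1} of real numbers such that: (1) (β_j) is nondecreasing with β_j > 0 for all j and β_j → ∞, and (u_j) is nonincreasing with 0 < u_j < 1 for all j and u_j → 0; (2) β_{j+1} − β_j → 0 as j → ∞; (3) for each fixed integer k ≥ 1, β_{j·k} / (∑_{i=1}^{j} β_i) → 0 as j → ∞; (4) C(u_j) ≤ exp(γ₀ · β_j · u_j) for every j ≥ 1; (5) β_j · u_j → ∞ as j → ∞. -/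
open Filter Topology

namespace Stmt7Aux

noncomputable def L (C : ℝ → ℝ) (n : ℕ) : ℝ := max (Real.log (C (1 / ((n : ℝ) + 2)))) 0

noncomputable def R (C : ℝ → ℝ) (γ₀ : ℝ) (n : ℕ) : ℝ := max (L C n / γ₀) n

noncomputable def A (C : ℝ → ℝ) (γ₀ : ℝ) : ℕ → ℕ
  | 0 => 0
  | n + 1 => max (A C γ₀ n + 1) ⌈((((n : ℝ) + 1) + 2) * R C γ₀ (n + 1)) ^ 2⌉₊

noncomputable def s0 (C : ℝ → ℝ) (γ₀ : ℝ) : ℕ := ⌈(2 * L C 0 / γ₀) ^ 2⌉₊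

noncomputable def M (C : ℝ → ℝ) (γ₀ : ℝ) (j : ℕ) : ℕ :=
  Nat.findGreatest (fun n => A C γ₀ n ≤ j) j

variable (C : ℝ → ℝ) (γ₀ : ℝ)

lemma L_nonneg (n : ℕ) : 0 ≤ L C n := le_max_right _ _

lemma R_nonneg (n : ℕ) : 0 ≤ R C γ₀ n :=
  le_trans (Nat.cast_nonneg n) (le_max_right _ _)

lemma A_strictMono : StrictMono (A C γ₀) :=
  strictMono_nat_of_lt_succ fun n => lt_of_lt_of_le (Nat.lt_succ_self _) (le_max_left _ _)

lemma le_A (n : ℕ) : n ≤ A C γ₀ n := (A_strictMono C γ₀).le_apply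

lemma sqrt_A_ge (m : ℕ) (hm : 1 ≤ m) :
    ((m : ℝ) + 2) * R C γ₀ m ≤ Real.sqrt (A C γ₀ m) := by
  obtain ⟨n, rfl⟩ : ∃ n, m = n + 1 := ⟨m - 1, (Nat.succ_pred_eq_of_pos hm).symm⟩
  have h1 : (((((n : ℝ) + 1) + 2) * R C γ₀ (n + 1)) ^ 2 : ℝ) ≤ (A C γ₀ (n + 1) : ℝ) := by
    refine (Nat.le_ceil _).trans ?_
    exact Nat.cast_le.mpr (le_max_right _ _)
  have := Real.le_sqrt_of_sq_le h1
  push_cast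
  convert this using 2

lemma A_M_le (j : ℕ) : A C γ₀ (M C γ₀ j) ≤ j := by
  by_cases h : M C γ₀ j = 0
  · rw [h]; exact Nat.zero_le j
  · exact Nat.findGreatest_of_ne_zero (P := fun n => A C γ₀ n ≤ j) (n := j) rfl h

lemma M_mono : Monotone (M C γ₀) := fun j k hjk =>
  Nat.findGreatest_mono (fun n hn => hn.trans hjk) hjk

lemma le_M (n j : ℕ) (h : A C γ₀ n ≤ j) : n ≤ M C γ₀ j :=
  Nat.le_findGreatest ((le_A C γ₀ n).trans h) h

lemma M_top : Tendsto (M C γ₀) atTop atTop :=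
  tendsto_atTop_atTop.mpr fun n => ⟨A C γ₀ n, fun j hj => le_M C γ₀ n j hj⟩

lemma sqrt_nat_top (c : ℕ) : Tendsto (fun j : ℕ => Real.sqrt ((j : ℝ) + c)) atTop atTop := by
  refine tendsto_atTop_atTop.mpr fun b => ⟨⌈(max b 0) ^ 2⌉₊, fun j hj => ?_⟩
  have h1 : ((max b 0) ^ 2 : ℝ) ≤ (j : ℝ) + c := by
    have h2 : ((⌈(max b 0) ^ 2⌉₊ : ℝ)) ≤ (j : ℝ) := Nat.cast_le.mpr hj
    have h3 : (0:ℝ) ≤ c := Nat.cast_nonneg c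
    linarith [Nat.le_ceil ((max b 0) ^ 2)]
  exact (le_max_left b 0).trans (Real.le_sqrt_of_sq_le h1)

end Stmt7Aux

/-- For any function `C : ℝ → ℝ` and any `γ₀ > 0` there exist sequences
`(β_j)_{j≥1}` nondecreasing, positive, tending to `∞`, and `(u_j)_{j≥1}` nonincreasing with
`0 < u_j < 1` tending to `0`, such that `β_{j+1} − β_j → 0`, for each fixed `k ≥ 1` one has
`β_{jk} / ∑_{i=1}^j β_i → 0`, `C(u_j) ≤ exp(γ₀ β_j u_j)` for every `j ≥ 1`, and
`β_j u_j → ∞`. -/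
theorem stmt_7 (C : ℝ → ℝ) (γ₀ : ℝ) (hγ₀ : 0 < γ₀) :
    ∃ β u : ℕ → ℝ,
      ((∀ j k : ℕ, 1 ≤ j → j ≤ k → β j ≤ β k) ∧ (∀ j : ℕ, 1 ≤ j → 0 < β j) ∧
        Tendsto β atTop atTop) ∧
      ((∀ j k : ℕ, 1 ≤ j → j ≤ k → u k ≤ u j) ∧ (∀ j : ℕ, 1 ≤ j → 0 < u j ∧ u j < 1) ∧
        Tendsto u atTop (𝓝 0)) ∧
      Tendsto (fun j : ℕ => β (j + 1) - β j) atTop (𝓝 0) ∧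
      (∀ k : ℕ, 1 ≤ k →
        Tendsto (fun j : ℕ => β (j * k) / ∑ i ∈ Finset.Icc 1 j, β i) atTop (𝓝 0)) ∧
      (∀ j : ℕ, 1 ≤ j → C (u j) ≤ Real.exp (γ₀ * β j * u j)) ∧
      Tendsto (fun j : ℕ => β j * u j) atTop atTop := by
  classical
  set s : ℕ := Stmt7Aux.s0 C γ₀ with hs
  set β : ℕ → ℝ := fun j => Real.sqrt ((j : ℝ) + s) with hβ
  set u : ℕ → ℝ := fun j => 1 / ((Stmt7Aux.M C γ₀ j : ℝ) + 2) with hu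
  have hβj : ∀ j : ℕ, β j = Real.sqrt ((j : ℝ) + s) := fun j => rfl
  have huj : ∀ j : ℕ, u j = 1 / ((Stmt7Aux.M C γ₀ j : ℝ) + 2) := fun j => rfl
  refine ⟨β, u, ⟨?_, ?_, ?_⟩, ⟨?_, ?_, ?_⟩, ?_, ?_, ?_, ?_⟩
  -- β nondecreasing
  · intro j k _ hjk
    apply Real.sqrt_le_sqrt
    have : (j:ℝ) ≤ (k:ℝ) := Nat.cast_le.mpr hjk
    linarith
  -- β positive
  · intro j hj
    apply Real.sqrt_pos.mpr
    have h1 : (1 : ℝ) ≤ (j : ℝ) := by exact_mod_cast hj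
    have h2 : (0:ℝ) ≤ (s:ℝ) := Nat.cast_nonneg s
    linarith
  -- β → ∞
  · exact Stmt7Aux.sqrt_nat_top s
  -- u nonincreasing
  · intro j k _ hjk
    apply one_div_le_one_div_of_le
    · positivity
    · have := (Nat.cast_le (α := ℝ)).mpr (Stmt7Aux.M_mono C γ₀ hjk)
      linarith
  -- 0 < u < 1
  · intro j _
    refine ⟨by positivity, ?_⟩
    rw [div_lt_one (by positivity)]
    have : (0:ℝ) ≤ (Stmt7Aux.M C γ₀ j : ℝ) := Nat.cast_nonneg _
    linarith
  -- u → 0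
  · have h1 : Tendsto (fun n : ℕ => 1 / ((n : ℝ) + 2)) atTop (𝓝 0) := by
      have h2 := (tendsto_const_div_atTop_nhds_zero_nat (1:ℝ)).comp (tendsto_add_atTop_nat 2)
      refine h2.congr fun n => ?_
      simp only [Function.comp]
      push_cast
      ring
    exact h1.comp (Stmt7Aux.M_top C γ₀)
  -- β(j+1) - β(j) → 0
  · apply squeeze_zero (g := fun j : ℕ => 1 / Real.sqrt ((j:ℝ) + 1))
    · intro j
      simp only [sub_nonneg, hβj]
      apply Real.sqrt_le_sqrt
      push_cast
      linarith
    · intro j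
      have hc : (0:ℝ) < Real.sqrt ((j:ℝ) + 1) := Real.sqrt_pos.mpr (by positivity)
      rw [hβj, hβj, sub_le_iff_le_add] -- we will instead prove via le_div_iff
      rw [← sub_le_iff_le_add, le_div_iff₀ hc]
      have hs0 : (0:ℝ) ≤ (s:ℝ) := Nat.cast_nonneg s
      have ha2 : Real.sqrt ((↑(j+1):ℝ) + s) ^ 2 = (j:ℝ) + 1 + s := by
        rw [Real.sq_sqrt (by positivity)]; push_cast; ring
      have hb2 : Real.sqrt ((j:ℝ) + s) ^ 2 = (j:ℝ) + s := Real.sq_sqrt (by positivity)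
      have hc2 : Real.sqrt ((j:ℝ) + 1) ^ 2 = (j:ℝ) + 1 := Real.sq_sqrt (by positivity)
      have hba : Real.sqrt ((j:ℝ) + s) ≤ Real.sqrt ((↑(j+1):ℝ) + s) := by
        apply Real.sqrt_le_sqrt; push_cast; linarith
      have hca : Real.sqrt ((j:ℝ) + 1) ≤ Real.sqrt ((↑(j+1):ℝ) + s) := by
        apply Real.sqrt_le_sqrt; push_cast; linarith
      have hb0 : (0:ℝ) ≤ Real.sqrt ((j:ℝ) + s) := Real.sqrt_nonneg _
      nlinarith [mul_nonneg (sub_nonneg.mpr hba) (sub_nonneg.mpr hca),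
        mul_nonneg hb0 (sub_nonneg.mpr hba)]
    · have h := (Stmt7Aux.sqrt_nat_top 1).inv_tendsto_atTop
      refine h.congr fun j => ?_
      simp only [Pi.inv_apply, Nat.cast_one, one_div]
  -- ratio → 0
  · intro k _
    have hksum : ∀ j : ℕ, (j:ℝ)^2 ≤ 2 * ∑ i ∈ Finset.Icc 1 j, (i:ℝ) := by
      intro j
      induction j with
      | zero => simp
      | succ n ih =>
        rw [Finset.sum_Icc_succ_top (by omega)]
        push_cast
        push_cast at ih
        nlinarith
    have hS : ∀ j : ℕ, 1 ≤ j → (j:ℝ) * Real.sqrt j / 2 ≤ ∑ i ∈ Finset.Icc 1 j, β i := by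
      intro j hj
      have hj1 : (1:ℝ) ≤ (j:ℝ) := by exact_mod_cast hj
      have hsj : (0:ℝ) < Real.sqrt j := Real.sqrt_pos.mpr (by linarith)
      have h1 : ∑ i ∈ Finset.Icc 1 j, (i:ℝ)/Real.sqrt j ≤ ∑ i ∈ Finset.Icc 1 j, β i := by
        apply Finset.sum_le_sum
        intro i hi
        have hij : (i:ℝ) ≤ (j:ℝ) := Nat.cast_le.mpr (Finset.mem_Icc.mp hi).2
        have hi0 : (0:ℝ) ≤ (i:ℝ) := Nat.cast_nonneg i
        have h2 : (i:ℝ) ≤ Real.sqrt i * Real.sqrt j := by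
          calc (i:ℝ) = Real.sqrt ((i:ℝ)*(i:ℝ)) := (Real.sqrt_mul_self hi0).symm
            _ ≤ Real.sqrt ((i:ℝ)*(j:ℝ)) := Real.sqrt_le_sqrt (by nlinarith)
            _ = Real.sqrt i * Real.sqrt j := Real.sqrt_mul hi0 _
        have h3 : (i:ℝ)/Real.sqrt j ≤ Real.sqrt i := by
          rw [div_le_iff₀ hsj]; exact h2
        refine h3.trans ?_
        rw [hβj]
        apply Real.sqrt_le_sqrt
        have : (0:ℝ) ≤ (s:ℝ) := Nat.cast_nonneg s
        linarith
      have h4 : (j:ℝ) * Real.sqrt j / 2 ≤ (∑ i ∈ Finset.Icc 1 j, (i:ℝ)) / Real.sqrt j := by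
        rw [div_le_div_iff₀ two_pos hsj]
        have hms : Real.sqrt (j:ℝ) * Real.sqrt (j:ℝ) = (j:ℝ) :=
          Real.mul_self_sqrt (by linarith)
        nlinarith [hksum j]
      rw [Finset.sum_div] at h4
      linarith
    apply squeeze_zero' (g := fun j : ℕ => 2 * Real.sqrt ((k:ℝ) + s) / j)
    · filter_upwards [eventually_ge_atTop 1] with j hj
      have hj1 : (1:ℝ) ≤ (j:ℝ) := by exact_mod_cast hj
      have hsj : (0:ℝ) < Real.sqrt j := Real.sqrt_pos.mpr (by linarith)
      have := hS j hj
      apply div_nonneg (Real.sqrt_nonneg _)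
      nlinarith
    · filter_upwards [eventually_ge_atTop 1] with j hj
      have hj1 : (1:ℝ) ≤ (j:ℝ) := by exact_mod_cast hj
      have hsj : (0:ℝ) < Real.sqrt j := Real.sqrt_pos.mpr (by linarith)
      have hden : (0:ℝ) < (j:ℝ) * Real.sqrt j / 2 := by positivity
      have hs0 : (0:ℝ) ≤ (s:ℝ) := Nat.cast_nonneg s
      have hk0 : (0:ℝ) ≤ (k:ℝ) := Nat.cast_nonneg k
      have hnum : β (j*k) ≤ Real.sqrt j * Real.sqrt ((k:ℝ) + s) := by
        rw [hβj]
        calc Real.sqrt ((↑(j*k):ℝ) + s) ≤ Real.sqrt ((j:ℝ) * ((k:ℝ) + s)) := by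
              apply Real.sqrt_le_sqrt; push_cast; nlinarith
          _ = Real.sqrt j * Real.sqrt ((k:ℝ) + s) := Real.sqrt_mul (by linarith) _
      have hchain := div_le_div₀ (by positivity) hnum hden (hS j hj)
      refine hchain.trans (le_of_eq ?_)
      rw [div_eq_div_iff hden.ne' (by linarith : (0:ℝ) < (j:ℝ)).ne']
      ring
    · exact tendsto_const_div_atTop_nhds_zero_nat _
  -- C(u j) ≤ exp
  · intro j hj
    set m := Stmt7Aux.M C γ₀ j with hm
    have hm2 : (0:ℝ) < (m:ℝ) + 2 := by positivity
    have hs0 : (0:ℝ) ≤ (s:ℝ) := Nat.cast_nonneg s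
    have hj0 : (0:ℝ) ≤ (j:ℝ) := Nat.cast_nonneg j
    have hyeq : γ₀ * β j * u j = γ₀ * Real.sqrt ((j:ℝ) + s) / ((m:ℝ) + 2) := by
      rw [hβj, huj, ← hm]; ring
    have key : Stmt7Aux.L C m ≤ γ₀ * Real.sqrt ((j:ℝ) + s) / ((m:ℝ) + 2) := by
      rcases Nat.eq_zero_or_pos m with h0 | h1
      · have hs2 : ((2 * Stmt7Aux.L C 0 / γ₀)^2 : ℝ) ≤ (j:ℝ) + s := by
          have h5 : ((2 * Stmt7Aux.L C 0 / γ₀)^2 : ℝ) ≤ (s:ℝ) := by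
            rw [hs]
            exact Nat.le_ceil _
          linarith
        have hsq := Real.le_sqrt_of_sq_le hs2
        have h2 : 2 * Stmt7Aux.L C 0 ≤ Real.sqrt ((j:ℝ) + s) * γ₀ := (div_le_iff₀ hγ₀).mp hsq
        rw [h0, le_div_iff₀ (by rw [h0] at hm2; exact_mod_cast hm2)]
        push_cast
        linarith
      · have hAm : Stmt7Aux.A C γ₀ m ≤ j := Stmt7Aux.A_M_le C γ₀ j
        have hsq1 : Real.sqrt ((Stmt7Aux.A C γ₀ m : ℕ) : ℝ) ≤ Real.sqrt ((j:ℝ) + s) := by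
          apply Real.sqrt_le_sqrt
          have := (Nat.cast_le (α := ℝ)).mpr hAm
          linarith
        have hsq2 := Stmt7Aux.sqrt_A_ge C γ₀ m h1
        have hL : Stmt7Aux.L C m ≤ Stmt7Aux.R C γ₀ m * γ₀ :=
          (div_le_iff₀ hγ₀).mp (le_max_left _ _)
        rw [le_div_iff₀ hm2]
        nlinarith [Stmt7Aux.R_nonneg C γ₀ m, hγ₀.le]
    have hujm : u j = 1 / ((m:ℝ) + 2) := by rw [huj, ← hm]
    by_cases hCpos : 0 < C (u j)
    · have hlog : Real.log (C (u j)) ≤ γ₀ * β j * u j := by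
        rw [hyeq]
        refine le_trans ?_ key
        have : Real.log (C (u j)) ≤ Stmt7Aux.L C m := by
          rw [Stmt7Aux.L, hujm]
          exact le_max_left _ _
        exact this
      calc C (u j) = Real.exp (Real.log (C (u j))) := (Real.exp_log hCpos).symm
        _ ≤ Real.exp (γ₀ * β j * u j) := Real.exp_le_exp.mpr hlog
    · push_neg at hCpos
      exact hCpos.trans (Real.exp_pos _).le
  -- β u → ∞
  · rw [tendsto_atTop]
    intro b
    set n := ⌈b⌉₊ + 1 with hn
    filter_upwards [eventually_ge_atTop (Stmt7Aux.A C γ₀ n)] with j hj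
    have hnM : n ≤ Stmt7Aux.M C γ₀ j := Stmt7Aux.le_M C γ₀ n j hj
    set m := Stmt7Aux.M C γ₀ j with hm
    have hm1 : 1 ≤ m := le_trans (by omega) hnM
    have hm2 : (0:ℝ) < (m:ℝ) + 2 := by positivity
    have hs0 : (0:ℝ) ≤ (s:ℝ) := Nat.cast_nonneg s
    have hAm : Stmt7Aux.A C γ₀ m ≤ j := Stmt7Aux.A_M_le C γ₀ j
    have h1 : Real.sqrt ((Stmt7Aux.A C γ₀ m : ℕ) : ℝ) ≤ Real.sqrt ((j:ℝ) + s) := by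
      apply Real.sqrt_le_sqrt
      have := (Nat.cast_le (α := ℝ)).mpr hAm
      linarith
    have h2 := Stmt7Aux.sqrt_A_ge C γ₀ m hm1
    have hRm : (m:ℝ) ≤ Stmt7Aux.R C γ₀ m := le_max_right _ _
    have hb : b ≤ (n:ℝ) := by
      have := Nat.le_ceil b
      rw [hn]; push_cast; linarith
    have hnm : (n:ℝ) ≤ (m:ℝ) := Nat.cast_le.mpr hnM
    have heq : β j * u j = Real.sqrt ((j:ℝ) + s) / ((m:ℝ) + 2) := by
      rw [hβj, huj, ← hm]; ring
    rw [heq, le_div_iff₀ hm2]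
    have hbR : b ≤ Stmt7Aux.R C γ₀ m := hb.trans (hnm.trans hRm)
    have h3 := mul_le_mul_of_nonneg_right hbR hm2.le
    nlinarith
end

section
/- Fix κ > 0 and a ∈ ℝ with a < (4+κ)²/(8κ). Set Δ := (4+κ)² − 8aκ (which is positive), s*(a) := −1 + (4+κ)/√Δ, and α_κ(s) := (4+κ)²·s² / (8κ·(1+s)) for s > −1. Then s*(a) > −1, and for every s > −1: α_κ(s) − a·s ≥ α_κ(s*(a)) − a·s*(a) = −((4+κ) − √Δ)² / (8κ) = a − (4+κ)·((4+κ) − √Δ) / (4κ), with equality if and only if s = s*(a). In particular, the infimum of α_κ(s) − a·s over s > −1 is attained uniquely at s*(a) and equals a − (4+κ)·((4+κ) − √Δ)/(4κ). -/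
/-- The one-point exponent `α_κ(s) = (4+κ)²s²/(8κ(1+s))`. -/
noncomputable def alphaFn (κ s : ℝ) : ℝ := (4 + κ) ^ 2 * s ^ 2 / (8 * κ * (1 + s))

lemma key_identity (κ a s r : ℝ) (hκ : 0 < κ) (hs : -1 < s) (hr0 : 0 < r)
    (hr : r ^ 2 = (4 + κ) ^ 2 - 8 * a * κ) :
    alphaFn κ s - a * s + ((4 + κ) - r) ^ 2 / (8 * κ)
      = ((4 + κ) - r * (1 + s)) ^ 2 / (8 * κ * (1 + s)) := by
  have h1 : (0:ℝ) < 1 + s := by linarith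
  have hpoly : ((4 + κ) - r * (1 + s)) ^ 2
      = (4 + κ) ^ 2 * s ^ 2 - 8 * a * κ * s * (1 + s) + ((4 + κ) - r) ^ 2 * (1 + s) := by
    linear_combination (s * (1 + s)) * hr
  rw [hpoly]
  unfold alphaFn
  field_simp

/-- Fix `κ > 0` and `a < (4+κ)²/(8κ)`. With `Δ = (4+κ)² − 8aκ > 0` and
`s*(a) = −1 + (4+κ)/√Δ`, the function `s ↦ α_κ(s) − a·s` on `(−1,∞)` attains its infimum
uniquely at `s*(a)`, equal to `−((4+κ)−√Δ)²/(8κ) = a − (4+κ)((4+κ)−√Δ)/(4κ)`. -/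
theorem stmt_11 (κ a : ℝ) (hκ : 0 < κ) (ha : a < (4 + κ) ^ 2 / (8 * κ)) :
    let Δ : ℝ := (4 + κ) ^ 2 - 8 * a * κ
    let sStar : ℝ := -1 + (4 + κ) / Real.sqrt Δ
    0 < Δ ∧
    -1 < sStar ∧
    (∀ s : ℝ, -1 < s → alphaFn κ sStar - a * sStar ≤ alphaFn κ s - a * s) ∧
    alphaFn κ sStar - a * sStar = -((4 + κ) - Real.sqrt Δ) ^ 2 / (8 * κ) ∧
    alphaFn κ sStar - a * sStar = a - (4 + κ) * ((4 + κ) - Real.sqrt Δ) / (4 * κ) ∧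
    (∀ s : ℝ, -1 < s →
      (alphaFn κ s - a * s = alphaFn κ sStar - a * sStar ↔ s = sStar)) := by
  intro Δ sStar
  have hc : (0:ℝ) < 4 + κ := by linarith
  have h8 : (0:ℝ) < 8 * κ := by linarith
  have hΔ : 0 < Δ := by
    have := (lt_div_iff₀ h8).mp ha
    simp only [Δ]
    nlinarith
  set r := Real.sqrt Δ with hrdef
  have hr0 : 0 < r := Real.sqrt_pos.mpr hΔ
  have hr2 : r ^ 2 = (4 + κ) ^ 2 - 8 * a * κ := Real.sq_sqrt hΔ.le
  have hsStar : -1 < sStar := by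
    have : 0 < (4 + κ) / r := div_pos hc hr0
    simp only [sStar]; linarith
  have h1star : 1 + sStar = (4 + κ) / r := by simp only [sStar]; ring
  have hzstar : (4 + κ) - r * (1 + sStar) = 0 := by
    rw [h1star]; field_simp; ring
  have hval : alphaFn κ sStar - a * sStar = -((4 + κ) - r) ^ 2 / (8 * κ) := by
    have hk := key_identity κ a sStar r hκ hsStar hr0 hr2
    rw [hzstar] at hk
    simp at hk
    rw [neg_div]
    linarith
  refine ⟨hΔ, hsStar, ?_, hval, ?_, ?_⟩
  · intro s hs
    have h1s : (0:ℝ) < 1 + s := by linarith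
    have hkey := key_identity κ a s r hκ hs hr0 hr2
    have h1 : (0:ℝ) < 8 * κ * (1 + s) := mul_pos h8 h1s
    have hQ : 0 ≤ ((4 + κ) - r * (1 + s)) ^ 2 / (8 * κ * (1 + s)) :=
      div_nonneg (sq_nonneg _) h1.le
    rw [hval, neg_div]; linarith
  · rw [hval]
    field_simp
    linear_combination (-4) * hr2
  · intro s hs
    have h1s : (0:ℝ) < 1 + s := by linarith
    have hkey := key_identity κ a s r hκ hs hr0 hr2
    have h1 : (0:ℝ) < 8 * κ * (1 + s) := mul_pos h8 h1s
    rw [hval]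
    constructor
    · intro h
      rw [h, neg_div] at hkey
      have hz : ((4 + κ) - r * (1 + s)) ^ 2 / (8 * κ * (1 + s)) = 0 := by linarith
      have hz2 : ((4 + κ) - r * (1 + s)) ^ 2 = 0 := by
        field_simp at hz
        nlinarith [hz]
      have hz3 : (4 + κ) - r * (1 + s) = 0 :=
        pow_eq_zero_iff (n := 2) (by norm_num) |>.mp hz2
      have hts : 1 + s = (4 + κ) / r := by
        field_simp
        linarith
      simp only [sStar]
      linarith [hts]
    · intro h; rw [h, hval, neg_div]
end

section
/- Let U ⊆ ℂ be open and let a ∈ U with |a| = 1. Let ξ : U → ℂ be holomorphic on U and suppose that |ξ(p)| = 1 for every p ∈ U with |p| = 1 (so in particular |ξ(a)| = 1). Then there exists a real number r such that ξ'(a) = r·ξ(a)/a; equivalently, a·ξ'(a)·conj(ξ(a)) is a real number. -/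
open Complex

/-- Let `U ⊆ ℂ` be open, `a ∈ U` with `|a| = 1`, and let `ξ : U → ℂ` be
holomorphic, mapping the arc of the unit circle contained in `U` into the unit circle. Then
`ξ'(a)` is a real multiple of `ξ(a)/a`; equivalently `a·ξ'(a)·conj(ξ(a))` is real. -/
theorem stmt_13 (U : Set ℂ) (hU : IsOpen U) (a : ℂ) (haU : a ∈ U) (ha : ‖a‖ = 1)
    (ξ : ℂ → ℂ) (hξ_holo : DifferentiableOn ℂ ξ U)
    (hcirc : ∀ p ∈ U, ‖p‖ = 1 → ‖ξ p‖ = 1) :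
    (∃ r : ℝ, deriv ξ a = (r : ℂ) * (ξ a / a)) ∧
    (∃ t : ℝ, a * deriv ξ a * (starRingEnd ℂ) (ξ a) = (t : ℂ)) := by
  have ha0 : a ≠ 0 := by
    intro h; rw [h] at ha; simp at ha
  have haw : ‖ξ a‖ = 1 := hcirc a haU ha
  have hw0 : ξ a ≠ 0 := by
    intro h; rw [h] at haw; simp at haw
  have hae : Complex.exp ((a.arg : ℂ) * I) = a := by
    have h := Complex.norm_mul_exp_arg_mul_I a
    rw [ha] at h
    simpa using h
  set θ₀ : ℝ := a.arg with hθ₀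
  set D : ℂ := deriv ξ a * (a * I) with hD
  have hξa : HasDerivAt ξ (deriv ξ a) a :=
    (hξ_holo.differentiableAt (hU.mem_nhds haU)).hasDerivAt
  have hcC : HasDerivAt (fun z : ℂ => Complex.exp (z * I)) (a * I) (θ₀ : ℂ) := by
    have h1 : HasDerivAt (fun z : ℂ => z * I) I (θ₀ : ℂ) := by
      simpa using (hasDerivAt_id ((θ₀ : ℝ) : ℂ)).mul_const I
    have h2 := (Complex.hasDerivAt_exp (((θ₀ : ℝ) : ℂ) * I)).comp (θ₀ : ℂ) h1
    simpa [hae, Function.comp_def] using h2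
  have hξa' : HasDerivAt ξ (deriv ξ a) (Complex.exp ((θ₀ : ℂ) * I)) := by
    rw [hae]; exact hξa
  have hGC : HasDerivAt (fun z : ℂ => ξ (Complex.exp (z * I))) D (θ₀ : ℂ) :=
    hξa'.comp (θ₀ : ℂ) hcC
  have hF : HasDerivAt (fun θ : ℝ => ξ (Complex.exp ((θ : ℂ) * I))) D θ₀ :=
    hGC.comp_ofReal
  have hFre : HasDerivAt (fun θ : ℝ => (ξ (Complex.exp ((θ : ℂ) * I))).re) D.re θ₀ := by
    simpa [Function.comp_def] using (Complex.reCLM.hasFDerivAt.comp_hasDerivAt θ₀ hF)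
  have hFim : HasDerivAt (fun θ : ℝ => (ξ (Complex.exp ((θ : ℂ) * I))).im) D.im θ₀ := by
    simpa [Function.comp_def] using (Complex.imCLM.hasFDerivAt.comp_hasDerivAt θ₀ hF)
  have hg : HasDerivAt
      (fun θ : ℝ => (ξ (Complex.exp ((θ : ℂ) * I))).re * (ξ (Complex.exp ((θ : ℂ) * I))).re
        + (ξ (Complex.exp ((θ : ℂ) * I))).im * (ξ (Complex.exp ((θ : ℂ) * I))).im)
      (D.re * (ξ a).re + (ξ a).re * D.re + (D.im * (ξ a).im + (ξ a).im * D.im)) θ₀ := by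
    have := (hFre.mul hFre).add (hFim.mul hFim)
    simpa [hae, Pi.mul_def, Pi.add_def] using this
  have hev : (fun θ : ℝ => (ξ (Complex.exp ((θ : ℂ) * I))).re * (ξ (Complex.exp ((θ : ℂ) * I))).re
        + (ξ (Complex.exp ((θ : ℂ) * I))).im * (ξ (Complex.exp ((θ : ℂ) * I))).im)
      =ᶠ[nhds θ₀] fun _ => (1 : ℝ) := by
    have hcont : ContinuousAt (fun θ : ℝ => Complex.exp ((θ : ℂ) * I)) θ₀ :=
      (Complex.continuous_exp.comp (Complex.continuous_ofReal.mul continuous_const)).continuousAt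
    have hmem : ∀ᶠ θ : ℝ in nhds θ₀, Complex.exp ((θ : ℂ) * I) ∈ U := by
      apply hcont.preimage_mem_nhds
      rw [hae]
      exact hU.mem_nhds haU
    filter_upwards [hmem] with θ hθ
    have habs : ‖Complex.exp ((θ : ℂ) * I)‖ = 1 := by
      simp [Complex.norm_exp_ofReal_mul_I θ]
    have h1 : ‖ξ (Complex.exp ((θ : ℂ) * I))‖ = 1 := hcirc _ hθ habs
    have h2 : Complex.normSq (ξ (Complex.exp ((θ : ℂ) * I))) = 1 := by
      rw [Complex.normSq_eq_norm_sq, h1]; norm_num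
    simpa [Complex.normSq_apply] using h2
  have hd0 : D.re * (ξ a).re + (ξ a).re * D.re + (D.im * (ξ a).im + (ξ a).im * D.im) = 0 := by
    have hconst : HasDerivAt (fun _ : ℝ => (1 : ℝ))
        (D.re * (ξ a).re + (ξ a).re * D.re + (D.im * (ξ a).im + (ξ a).im * D.im)) θ₀ :=
      hg.congr_of_eventuallyEq hev.symm
    exact hconst.unique (hasDerivAt_const θ₀ 1)
  have him : (a * deriv ξ a * (starRingEnd ℂ) (ξ a)).im = 0 := by
    rw [hD] at hd0
    simp only [Complex.mul_re, Complex.mul_im, Complex.I_re, Complex.I_im,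
      Complex.conj_re, Complex.conj_im] at hd0 ⊢
    linear_combination (-1/2 : ℝ) * hd0
  set t : ℝ := (a * deriv ξ a * (starRingEnd ℂ) (ξ a)).re with ht
  have heq : a * deriv ξ a * (starRingEnd ℂ) (ξ a) = (t : ℂ) := by
    apply Complex.ext
    · simp [ht]
    · simp [him]
  refine ⟨⟨t, ?_⟩, ⟨t, heq⟩⟩
  have hww : ξ a * (starRingEnd ℂ) (ξ a) = 1 := by
    rw [Complex.mul_conj]
    norm_cast
    rw [Complex.normSq_eq_norm_sq, haw]; norm_num
  field_simp
  linear_combination ξ a * heq - a * deriv ξ a * hww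
end
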